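/- arXiv:2310.16940 — 3 statements merged into one kernel-verified Lean document; each statement's English description precedes it below -/
import Mathlib

section
/- Let 0 < p < 1, ε > 0, c > 0, γ > 0, let ξ : (1,∞) → [0,∞) be continuous and bounded as t → ∞, and let b : ℕ → [0,∞) satisfy Σ_j b_j^p < ∞. Then there exists a constant C ≥ 0, depending only on b, p, ε, c, γ and ξ, with the following property: every sequence d : 𝓕 → ℝ such that |d_0| ≤ c and such that, for every ν ∈ 𝓕 with ν ≠ 0 and every ρ : ℕ → [1,∞) with ρ_k > 1 for all k ∈ supp(ν) and with the series Σ_j ((ρ_j + ρ_j^{−1})/2 − 1) b_j convergent with sum at most ε, one has |d_ν| ≤ ∏_{k∈supp(ν)} ξ(ρ_k) ρ_k^{−ν_k} (c ν_k + 1)^γ, satisfies Σ_{ν∈𝓕} |d_ν|^p ≤ C^p. -/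
open scoped BigOperators
open scoped NNReal

/-- Pair-injection product bound. -/
lemma pair_sum_le {α β γ' : Type*} [DecidableEq β] [DecidableEq γ']
    (S : Finset α) (f : α → β) (g : α → γ') (F : β → ℝ) (G : γ' → ℝ)
    (hF : ∀ x, 0 ≤ F x) (hG : ∀ y, 0 ≤ G y)
    (hinj : ∀ a ∈ S, ∀ a' ∈ S, f a = f a' → g a = g a' → a = a') :
    ∑ a ∈ S, F (f a) * G (g a) ≤ (∑ x ∈ S.image f, F x) * (∑ y ∈ S.image g, G y) := by
  classical
  have h1 : ∑ a ∈ S, F (f a) * G (g a)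
      = ∑ pr ∈ S.image (fun a => (f a, g a)), F pr.1 * G pr.2 := by
    rw [Finset.sum_image]
    intro a ha a' ha' h
    exact hinj a ha a' ha' (congrArg Prod.fst h) (congrArg Prod.snd h)
  rw [h1, Finset.sum_mul_sum]
  rw [← Finset.sum_product']
  apply Finset.sum_le_sum_of_subset_of_nonneg
  · intro pr hpr
    simp only [Finset.mem_image] at hpr
    obtain ⟨a, ha, rfl⟩ := hpr
    simp only [Finset.mem_product, Finset.mem_image]
    exact ⟨⟨a, ha, rfl⟩, ⟨a, ha, rfl⟩⟩
  · intro pr _ _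
    exact mul_nonneg (hF _) (hG _)

/-- sums over tail finsets bounded by shifted tsum -/
lemma sum_tail_le (f : ℕ → ℝ) (hf : ∀ n, 0 ≤ f n) (hsum : Summable f) (J : ℕ)
    (s : Finset ℕ) (hs : ∀ k ∈ s, J ≤ k) :
    ∑ k ∈ s, f k ≤ ∑' i, f (i + J) := by
  classical
  have hsum' : Summable fun i => f (i + J) := (summable_nat_add_iff J).2 hsum
  have h1 : ∑ k ∈ s, f k = ∑ i ∈ s.image (· - J), f (i + J) := by
    rw [Finset.sum_image (by intro x hx y hy h; have := hs x hx; have := hs y hy; simp only at h; omega)]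
    apply Finset.sum_congr rfl
    intro k hk
    rw [Nat.sub_add_cancel (hs k hk)]
  rw [h1]
  exact Summable.sum_le_tsum _ (fun i _ => hf _) hsum'

/-- Head sum bound: sums of products over a fixed finite coordinate set. -/
lemma head_sum_le (h : ℕ → ℝ) (h0 : h 0 = 1) (hnn : ∀ n, 0 ≤ h n) (hsu : Summable h) :
    ∀ (s : Finset ℕ) (S : Finset (ℕ →₀ ℕ)), (∀ a ∈ S, (a.support : Set ℕ) ⊆ s) →
      ∑ a ∈ S, ∏ k ∈ s, h (a k) ≤ (∑' n, h n) ^ s.card := by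
  classical
  have htsum1 : (1:ℝ) ≤ ∑' n, h n := h0 ▸ Summable.le_tsum hsu 0 (fun n _ => hnn n)
  intro s
  induction s using Finset.cons_induction with
  | empty =>
      intro S hS
      simp only [Finset.prod_empty, Finset.sum_const, Finset.card_empty, pow_zero, nsmul_eq_mul,
        mul_one]
      have : S ⊆ {0} := by
        intro a ha
        have := hS a ha
        simp only [Finset.coe_empty, Set.subset_empty_iff, Finset.coe_eq_empty,
          Finsupp.support_eq_empty] at this
        simp [this]
      calc (S.card : ℝ) ≤ ({0} : Finset (ℕ →₀ ℕ)).card := by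
            exact_mod_cast Nat.cast_le.mpr (Finset.card_le_card this)
        _ = 1 := by simp
  | cons i s' hi IH =>
      intro S hS
      have key : ∀ a ∈ S, ∏ k ∈ Finset.cons i s' hi, h (a k)
          = h (a i) * ∏ k ∈ s', h ((a.erase i) k) := by
        intro a _
        rw [Finset.prod_cons]
        congr 1
        apply Finset.prod_congr rfl
        intro k hk
        rw [Finsupp.erase_ne (by rintro rfl; exact hi hk)]
      rw [Finset.sum_congr rfl key]
      have h1 : ∑ x ∈ S.image (fun a => a i), h x ≤ ∑' n, h n :=
        Summable.sum_le_tsum _ (fun n _ => hnn n) hsu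
      have h2 : ∑ y ∈ S.image (fun a => a.erase i), ∏ k ∈ s', h (y k)
          ≤ (∑' n, h n) ^ s'.card := by
        apply IH
        intro a ha
        simp only [Finset.mem_image] at ha
        obtain ⟨a', ha', rfl⟩ := ha
        rw [Finsupp.support_erase]
        intro k hk
        simp only [Finset.coe_erase, Set.mem_diff, Finset.mem_coe] at hk
        have := hS a' ha' hk.1
        simp only [Finset.coe_cons, Set.mem_insert_iff, Finset.mem_coe] at this
        rcases this with rfl | hmem
        · exact absurd rfl hk.2
        · exact hmem
      have hP := pair_sum_le S (fun a => a i) (fun a => a.erase i) h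
        (fun bb => ∏ k ∈ s', h (bb k)) hnn
        (fun y => Finset.prod_nonneg fun k _ => hnn _) ?_
      · refine le_trans hP ?_
        rw [Finset.card_cons, pow_succ']
        exact mul_le_mul h1 h2 (Finset.sum_nonneg fun y _ =>
          Finset.prod_nonneg fun k _ => hnn _) (le_trans zero_le_one htsum1)
      · intro a ha a' ha' hfi hg
        ext k
        by_cases hk : k = i
        · subst hk; exact hfi
        · have := congrArg (fun m => m k) hg
          simpa [Finsupp.erase_ne hk] using this

lemma multinomial_extend (m : ℕ →₀ ℕ) (s : Finset ℕ) (hs : m.support ⊆ s) :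
    Nat.multinomial s m = Nat.multinomial m.support m := by
  unfold Nat.multinomial
  rw [Finset.sum_subset hs (fun i _ hi => Finsupp.notMem_support_iff.mp hi),
    Finset.prod_subset hs (fun i _ hi => by
      rw [Finsupp.notMem_support_iff.mp hi]; rfl)]

/-- Multinomial-weighted partial sums are controlled by powers of the tail mass. -/
lemma multinom_sum_le (cs : ℕ → ℝ) (hcs : ∀ k, 0 ≤ cs k) (q : ℝ) (J N : ℕ)
    (hsum : ∀ s : Finset ℕ, (∀ k ∈ s, J ≤ k) → ∑ k ∈ s, cs k ≤ q)
    (S : Finset (ℕ →₀ ℕ))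
    (hS : ∀ m ∈ S, (∀ k ∈ m.support, J ≤ k) ∧ (m.sum fun _ n => n) = N) :
    ∑ m ∈ S, (Nat.multinomial m.support m : ℝ) * ∏ k ∈ m.support, cs k ^ m k ≤ q ^ N := by
  classical
  have hq0 : 0 ≤ q := le_trans (by simp) (hsum ∅ (by simp))
  set s : Finset ℕ := S.biUnion Finsupp.support with hsdef
  have hssub : ∀ m ∈ S, m.support ⊆ s := fun m hm => Finset.subset_biUnion_of_mem _ hm
  have hterm : ∀ m ∈ S, (Nat.multinomial m.support m : ℝ) * ∏ k ∈ m.support, cs k ^ m k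
      = (Nat.multinomial s m : ℝ) * ∏ k ∈ s, cs k ^ m k := by
    intro m hm
    rw [multinomial_extend m s (hssub m hm),
      Finset.prod_subset (hssub m hm) (fun i _ hi => by
        rw [Finsupp.notMem_support_iff.mp hi, pow_zero])]
  rw [Finset.sum_congr rfl hterm]
  have hinj : ∀ m ∈ S, ∀ m' ∈ S, (m : ℕ → ℕ) = (m' : ℕ → ℕ) → m = m' := by
    intro m _ m' _ h
    exact DFunLike.coe_injective h
  have h1 : ∑ m ∈ S, (Nat.multinomial s m : ℝ) * ∏ k ∈ s, cs k ^ m k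
      = ∑ f ∈ S.image (fun m : ℕ →₀ ℕ => (m : ℕ → ℕ)),
          (Nat.multinomial s f : ℝ) * ∏ k ∈ s, cs k ^ f k := by
    rw [Finset.sum_image hinj]
  rw [h1]
  have h2 : S.image (fun m : ℕ →₀ ℕ => (m : ℕ → ℕ)) ⊆ s.piAntidiag N := by
    intro f hf
    simp only [Finset.mem_image] at hf
    obtain ⟨m, hm, rfl⟩ := hf
    rw [Finset.mem_piAntidiag]
    constructor
    · rw [← Finset.sum_subset (hssub m hm) (fun i _ hi => Finsupp.notMem_support_iff.mp hi)]
      exact (hS m hm).2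
    · intro i hi
      exact hssub m hm (Finsupp.mem_support_iff.mpr hi)
  calc ∑ f ∈ S.image (fun m : ℕ →₀ ℕ => (m : ℕ → ℕ)),
          (Nat.multinomial s f : ℝ) * ∏ k ∈ s, cs k ^ f k
      ≤ ∑ f ∈ s.piAntidiag N, (Nat.multinomial s f : ℝ) * ∏ k ∈ s, cs k ^ f k := by
        apply Finset.sum_le_sum_of_subset_of_nonneg h2
        intro f _ _
        exact mul_nonneg (by positivity) (Finset.prod_nonneg fun k _ => pow_nonneg (hcs k) _)
    _ = (∑ k ∈ s, cs k) ^ N := (Finset.sum_pow_eq_sum_piAntidiag s cs N).symm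
    _ ≤ q ^ N := by
        apply pow_le_pow_left₀ (Finset.sum_nonneg fun k _ => hcs k)
        apply hsum
        intro k hk
        simp only [hsdef, Finset.mem_biUnion] at hk
        obtain ⟨m, hm, hk⟩ := hk
        exact (hS m hm).1 k hk

lemma real_add_rpow_le {x y p : ℝ} (hx : 0 ≤ x) (hy : 0 ≤ y) (hp0 : 0 ≤ p) (hp1 : p ≤ 1) :
    (x + y) ^ p ≤ x ^ p + y ^ p := by
  have h := NNReal.rpow_add_le_add_rpow x.toNNReal y.toNNReal hp0 hp1
  have hx' : ((x.toNNReal : ℝ≥0) : ℝ) = x := Real.coe_toNNReal _ hx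
  have hy' : ((y.toNNReal : ℝ≥0) : ℝ) = y := Real.coe_toNNReal _ hy
  calc (x + y) ^ p = ((x.toNNReal + y.toNNReal : ℝ≥0) : ℝ) ^ p := by
        rw [NNReal.coe_add, hx', hy']
    _ = (((x.toNNReal + y.toNNReal : ℝ≥0) ^ p : ℝ≥0) : ℝ) := (NNReal.coe_rpow _ _).symm
    _ ≤ (((x.toNNReal ^ p + y.toNNReal ^ p : ℝ≥0)) : ℝ) := NNReal.coe_le_coe.mpr h
    _ = x ^ p + y ^ p := by
        rw [NNReal.coe_add, NNReal.coe_rpow, NNReal.coe_rpow, hx', hy']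

lemma summable_of_rpow_summable {p : ℝ} (hp0 : 0 < p) (hp1 : p < 1)
    (b : ℕ → ℝ) (hb : ∀ j, 0 ≤ b j) (hbp : Summable fun j => b j ^ p) :
    Summable b := by
  have h0 : Filter.Tendsto (fun j => b j ^ p) Filter.atTop (nhds 0) := hbp.tendsto_atTop_zero
  have hev : ∀ᶠ j in Filter.atTop, b j ≤ b j ^ p := by
    filter_upwards [h0.eventually (gt_mem_nhds one_pos)] with j hj
    rcases eq_or_lt_of_le (hb j) with h | h
    · rw [← h, Real.zero_rpow hp0.ne']
    · have hb1 : b j ≤ 1 := by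
        by_contra hcon
        push_neg at hcon
        have : (1:ℝ) ≤ b j ^ p := Real.one_le_rpow hcon.le hp0.le
        linarith
      calc b j = b j ^ (1:ℝ) := (Real.rpow_one _).symm
        _ ≤ b j ^ p := Real.rpow_le_rpow_of_exponent_ge h hb1 hp1.le
  obtain ⟨J, hJ⟩ := Filter.eventually_atTop.mp hev
  have : Summable fun j => b (j + J) := by
    apply Summable.of_nonneg_of_le (fun j => hb _) (fun j => hJ (j + J) (by omega))
    exact (summable_nat_add_iff J).2 hbp
  exact (summable_nat_add_iff J).1 this

/-- Summability of geometric-with-polynomial rpow sequences. -/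
lemma summable_geom_poly {r s : ℝ} (hr0 : 0 < r) (hr1 : r < 1) (hs : 0 ≤ s) :
    Summable fun n : ℕ => ((n:ℝ) + 1) ^ s * r ^ n := by
  set m : ℕ := ⌈s⌉₊ with hm
  have hb : ∀ n : ℕ, ((n:ℝ) + 1) ^ s * r ^ n ≤ ((n:ℝ) + 1) ^ m * r ^ n := by
    intro n
    apply mul_le_mul_of_nonneg_right _ (pow_nonneg hr0.le n)
    calc ((n:ℝ) + 1) ^ s ≤ ((n:ℝ) + 1) ^ (m:ℝ) :=
          Real.rpow_le_rpow_of_exponent_le (by linarith [Nat.cast_nonneg (α := ℝ) n]) (Nat.le_ceil s)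
      _ = ((n:ℝ) + 1) ^ m := Real.rpow_natCast _ m
  apply Summable.of_nonneg_of_le (fun n => by positivity) hb
  have h1 : Summable fun n : ℕ => ((n:ℝ)) ^ m * r ^ n := by
    have := summable_pow_mul_geometric_of_norm_lt_one (R := ℝ) m
      (r := r) (by rwa [Real.norm_eq_abs, abs_of_pos hr0])
    exact this
  have h2 : Summable fun n : ℕ => (((n:ℕ):ℝ) + 1) ^ m * r ^ (n + 1) := by
    have := (summable_nat_add_iff 1).2 h1
    simpa [Nat.cast_add] using this
  have h3 : Summable fun n : ℕ => r⁻¹ * ((((n:ℕ):ℝ) + 1) ^ m * r ^ (n + 1)) := h2.mul_left _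
  apply h3.congr
  intro n
  field_simp
  ring

noncomputable def headf (ξ : ℝ → ℝ) (δ c γ p : ℝ) : ℕ → ℝ := fun n =>
  if n = 0 then 1 else (ξ (1+δ) * (1+δ) ^ (-(n:ℝ)) * (c*(n:ℝ)+1) ^ γ) ^ p

noncomputable def Gfun (cs : ℕ → ℝ) (m : ℕ →₀ ℕ) : ℝ :=
  (Nat.multinomial m.support m : ℝ) * ∏ k ∈ m.support, cs k ^ m k

lemma Gfun_nonneg (cs : ℕ → ℝ) (hcs : ∀ k, 0 ≤ cs k) (m : ℕ →₀ ℕ) : 0 ≤ Gfun cs m :=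
  mul_nonneg (by positivity) (Finset.prod_nonneg fun k _ => pow_nonneg (hcs k) _)

set_option maxHeartbeats 1000000 in
lemma core_bound
    (p ε c γ : ℝ) (hp0 : 0 < p) (hp1 : p < 1) (hε : 0 < ε) (hc : 0 < c) (hγ : 0 < γ)
    (ξ : ℝ → ℝ) (hξnonneg : ∀ t : ℝ, 1 < t → 0 ≤ ξ t)
    (M T : ℝ) (hT : 1 < T) (hMT : ∀ t, T ≤ t → ξ t ≤ M)
    (b : ℕ → ℝ) (hb : ∀ j, 0 ≤ b j)
    (b' : ℕ → ℝ) (hb'pos : ∀ k, 0 < b' k) (hbb' : ∀ k, b k ≤ b' k)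
    (J : ℕ) (δ : ℝ) (hδ : 0 < δ)
    (hheadb : δ * (∑ k ∈ Finset.range J, b k) ≤ ε / 2)
    (htailb : ∀ s : Finset ℕ, (∀ k ∈ s, J ≤ k) → (T - 1) * ∑ k ∈ s, b k ≤ ε / 2)
    (d : (ℕ →₀ ℕ) → ℝ)
    (hd : ∀ ν : ℕ →₀ ℕ, ν ≠ 0 →
      ∀ ρ : ℕ → ℝ, (∀ k, 1 ≤ ρ k) → (∀ k ∈ ν.support, 1 < ρ k) →
        Summable (fun j => ((ρ j + (ρ j)⁻¹) / 2 - 1) * b j) →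
        (∑' j, ((ρ j + (ρ j)⁻¹) / 2 - 1) * b j) ≤ ε →
        |d ν| ≤ ∏ k ∈ ν.support,
          ξ (ρ k) * (ρ k) ^ (-(ν k : ℝ)) * (c * (ν k : ℝ) + 1) ^ γ)
    (ν : ℕ →₀ ℕ) (hν : ν ≠ 0) :
    |d ν| ^ p ≤ (∏ k ∈ Finset.range J, headf ξ δ c γ p (ν k)) *
      Gfun (fun k => (Real.exp 1 * (max M 1 * (c+1) ^ γ * 2 ^ γ / ε) * b' k) ^ p)
        (Finsupp.filter (fun k => ¬ k < J) ν) := by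
  classical
  set D : ℝ := max M 1 * (c+1) ^ γ * 2 ^ γ / ε with hD
  set cs : ℕ → ℝ := fun k => (Real.exp 1 * D * b' k) ^ p with hcs
  set st : Finset ℕ := ν.support.filter (fun k => ¬ k < J) with hst
  set N : ℕ := ∑ k ∈ st, ν k with hN
  have hνsupp : ∀ k ∈ ν.support, 1 ≤ ν k := fun k hk =>
    Nat.one_le_iff_ne_zero.mpr (Finsupp.mem_support_iff.mp hk)
  have hNge : ∀ k ∈ st, ν k ≤ N := by
    intro k hk
    exact Finset.single_le_sum (fun i _ => Nat.zero_le _) hk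
  have hNpos : st.Nonempty → 0 < N := by
    rintro ⟨k, hk⟩
    have h1 : 1 ≤ ν k := hνsupp k (Finset.mem_filter.mp hk).1
    have h2 := hNge k hk
    omega
  set ρ : ℕ → ℝ := fun k =>
    if k ∈ ν.support then
      (if k < J then 1 + δ else T + ε * (ν k : ℝ) / (b' k * (N : ℝ)))
    else 1 with hρ
  have hρtail : ∀ k ∈ st, ρ k = T + ε * (ν k : ℝ) / (b' k * (N : ℝ)) := by
    intro k hk
    rcases Finset.mem_filter.mp hk with ⟨h1, h2⟩
    simp only [hρ, if_pos h1, if_neg h2]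
  have hρhead : ∀ k ∈ ν.support, k < J → ρ k = 1 + δ := by
    intro k h1 h2
    simp only [hρ, if_pos h1, if_pos h2]
  have hdivnn : ∀ k, (0:ℝ) ≤ ε * (ν k : ℝ) / (b' k * (N : ℝ)) := by
    intro k
    apply div_nonneg (by positivity)
    exact mul_nonneg (hb'pos k).le (Nat.cast_nonneg _)
  have hρ1 : ∀ k, 1 ≤ ρ k := by
    intro k
    simp only [hρ]
    split
    · split
      · linarith
      · have := hdivnn k
        linarith
    · exact le_refl 1
  have hρT : ∀ k ∈ st, T ≤ ρ k := by
    intro k hk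
    rw [hρtail k hk]
    have := hdivnn k
    linarith
  have hρgt : ∀ k ∈ ν.support, 1 < ρ k := by
    intro k hk
    by_cases hkJ : k < J
    · rw [hρhead k hk hkJ]; linarith
    · have hkst : k ∈ st := Finset.mem_filter.mpr ⟨hk, hkJ⟩
      have := hρT k hkst
      linarith
  have hzero : ∀ j ∉ ν.support, ((ρ j + (ρ j)⁻¹) / 2 - 1) * b j = 0 := by
    intro j hj
    have : ρ j = 1 := by simp only [hρ, if_neg hj]
    rw [this]
    norm_num
  have hsummable : Summable (fun j => ((ρ j + (ρ j)⁻¹) / 2 - 1) * b j) :=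
    summable_of_ne_finset_zero hzero
  have htsum : (∑' j, ((ρ j + (ρ j)⁻¹) / 2 - 1) * b j) ≤ ε := by
    rw [tsum_eq_sum hzero]
    have hterm : ∀ j ∈ ν.support, ((ρ j + (ρ j)⁻¹) / 2 - 1) * b j ≤ (ρ j - 1) / 2 * b j := by
      intro j _
      apply mul_le_mul_of_nonneg_right _ (hb j)
      have h1 : (1:ℝ) ≤ ρ j := hρ1 j
      have h2 : (ρ j)⁻¹ ≤ 1 := inv_le_one_of_one_le₀ h1
      linarith
    refine le_trans (Finset.sum_le_sum hterm) ?_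
    rw [← Finset.sum_filter_add_sum_filter_not ν.support (fun k => k < J)]
    have hhead : ∑ j ∈ ν.support.filter (fun k => k < J), (ρ j - 1) / 2 * b j ≤ ε / 4 := by
      have heq : ∀ j ∈ ν.support.filter (fun k => k < J), (ρ j - 1) / 2 * b j = δ / 2 * b j := by
        intro j hj
        rcases Finset.mem_filter.mp hj with ⟨h1, h2⟩
        rw [hρhead j h1 h2]
        ring_nf
      rw [Finset.sum_congr rfl heq]
      have hsub : ∑ j ∈ ν.support.filter (fun k => k < J), δ / 2 * b j
          ≤ ∑ j ∈ Finset.range J, δ / 2 * b j := by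
        apply Finset.sum_le_sum_of_subset_of_nonneg
        · intro j hj
          exact Finset.mem_range.mpr (Finset.mem_filter.mp hj).2
        · intro j _ _
          exact mul_nonneg (by linarith) (hb j)
      refine le_trans hsub ?_
      rw [← Finset.mul_sum]
      calc δ / 2 * ∑ j ∈ Finset.range J, b j = δ * (∑ j ∈ Finset.range J, b j) / 2 := by ring
        _ ≤ (ε / 2) / 2 := by linarith
        _ = ε / 4 := by ring
    have htail : ∑ j ∈ st, (ρ j - 1) / 2 * b j ≤ ε / 4 + ε / 2 := by
      have hterm2 : ∀ j ∈ st, (ρ j - 1) / 2 * b j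
          ≤ (T - 1) / 2 * b j + ε * (ν j : ℝ) / (2 * N) := by
        intro j hj
        rw [hρtail j hj]
        have hb'j := hb'pos j
        have hNj : 0 < N := hNpos ⟨j, hj⟩
        have hNjR : (0:ℝ) < (N:ℝ) := by exact_mod_cast hNj
        have hfrac : ε * (ν j : ℝ) / (b' j * (N : ℝ)) ≤ ε * (ν j : ℝ) / (b' j * (N : ℝ)) := le_refl _
        have key : ε * (ν j : ℝ) / (b' j * (N : ℝ)) * b j ≤ ε * (ν j : ℝ) / (N : ℝ) := by
          rw [div_mul_eq_mul_div, div_le_div_iff₀ (by positivity) hNjR]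
          have : ε * (ν j:ℝ) * b j ≤ ε * (ν j:ℝ) * b' j := by
            apply mul_le_mul_of_nonneg_left (hbb' j) (by positivity)
          calc ε * (ν j:ℝ) * b j * (N:ℝ) ≤ ε * (ν j:ℝ) * b' j * (N:ℝ) := by
                apply mul_le_mul_of_nonneg_right this hNjR.le
            _ = ε * (ν j:ℝ) * (b' j * (N:ℝ)) := by ring
        have expand : (T + ε * (ν j:ℝ) / (b' j * (N:ℝ)) - 1) / 2 * b j
            = (T - 1) / 2 * b j + (ε * (ν j:ℝ) / (b' j * (N:ℝ)) * b j) / 2 := by ring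
        rw [expand]
        have : (ε * (ν j:ℝ) / (b' j * (N:ℝ)) * b j) / 2 ≤ (ε * (ν j:ℝ) / (N:ℝ)) / 2 := by
          linarith
        calc (T - 1) / 2 * b j + (ε * (ν j:ℝ) / (b' j * (N:ℝ)) * b j) / 2
            ≤ (T - 1) / 2 * b j + (ε * (ν j:ℝ) / (N:ℝ)) / 2 := by linarith
          _ = (T - 1) / 2 * b j + ε * (ν j:ℝ) / (2 * N) := by ring
      refine le_trans (Finset.sum_le_sum hterm2) ?_
      rw [Finset.sum_add_distrib]
      have h1 : ∑ j ∈ st, (T - 1) / 2 * b j ≤ ε / 4 := by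
        rw [← Finset.mul_sum]
        have hJst : ∀ k ∈ st, J ≤ k := by
          intro k hk
          have := (Finset.mem_filter.mp hk).2
          omega
        have := htailb st hJst
        calc (T - 1) / 2 * ∑ j ∈ st, b j = ((T-1) * ∑ j ∈ st, b j) / 2 := by ring
          _ ≤ (ε / 2) / 2 := by linarith
          _ = ε / 4 := by ring
      have h2 : ∑ j ∈ st, ε * (ν j : ℝ) / (2 * N) ≤ ε / 2 := by
        rcases st.eq_empty_or_nonempty with he | hne
        · rw [he]; simp; positivity
        · have hNj : 0 < N := hNpos hne
          have hNjR : (0:ℝ) < (N:ℝ) := by exact_mod_cast hNj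
          have : ∑ j ∈ st, ε * (ν j : ℝ) / (2 * N) = ε / (2 * N) * ∑ j ∈ st, (ν j : ℝ) := by
            rw [Finset.mul_sum]
            apply Finset.sum_congr rfl
            intro j _
            ring
          rw [this]
          have hsum : ∑ j ∈ st, (ν j : ℝ) = (N : ℝ) := by
            rw [hN]
            push_cast
            rfl
          rw [hsum]
          rw [div_mul_eq_mul_div, mul_comm]
          rw [div_le_iff₀ (by positivity)]
          ring_nf
          nlinarith [hNjR]
      linarith
    linarith
  have hdb := hd ν hν ρ hρ1 hρgt hsummable htsum
  set Ξ : ℕ → ℝ := fun k => ξ (ρ k) * (ρ k) ^ (-(ν k : ℝ)) * (c * (ν k : ℝ) + 1) ^ γ with hΞ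
  have hρpos : ∀ k, 0 < ρ k := fun k => lt_of_lt_of_le one_pos (hρ1 k)
  have hΞnn : ∀ k ∈ ν.support, 0 ≤ Ξ k := by
    intro k hk
    apply mul_nonneg (mul_nonneg (hξnonneg _ (hρgt k hk)) _) _
    · exact Real.rpow_nonneg (hρpos k).le _
    · apply Real.rpow_nonneg
      positivity
  have h1 : |d ν| ^ p ≤ (∏ k ∈ ν.support, Ξ k) ^ p :=
    Real.rpow_le_rpow (abs_nonneg _) hdb hp0.le
  have h2 : (∏ k ∈ ν.support, Ξ k) ^ p = ∏ k ∈ ν.support, (Ξ k) ^ p :=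
    (Real.finset_prod_rpow _ _ hΞnn p).symm
  have hsplit : ∏ k ∈ ν.support, (Ξ k) ^ p
      = (∏ k ∈ ν.support.filter (fun k => k < J), (Ξ k) ^ p) * ∏ k ∈ st, (Ξ k) ^ p :=
    (Finset.prod_filter_mul_prod_filter_not ν.support (fun k => k < J) _).symm
  -- head
  have hheadeq : ∏ k ∈ ν.support.filter (fun k => k < J), (Ξ k) ^ p
      = ∏ k ∈ Finset.range J, headf ξ δ c γ p (ν k) := by
    have e1 : ∀ k ∈ ν.support.filter (fun k => k < J),
        (Ξ k) ^ p = headf ξ δ c γ p (ν k) := by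
      intro k hk
      rcases Finset.mem_filter.mp hk with ⟨h1', h2'⟩
      have hνk : ν k ≠ 0 := Finsupp.mem_support_iff.mp h1'
      simp only [headf, if_neg hνk, hΞ, hρhead k h1' h2']
    rw [Finset.prod_congr rfl e1]
    apply Finset.prod_subset
    · intro k hk
      exact Finset.mem_range.mpr (Finset.mem_filter.mp hk).2
    · intro k hk hnk
      have hνk : ν k = 0 := by
        by_contra hcon
        exact hnk (Finset.mem_filter.mpr ⟨Finsupp.mem_support_iff.mpr hcon, Finset.mem_range.mp hk⟩)
      simp [headf, hνk]
  -- tail: pointwise bound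
  have hK1 : (1:ℝ) ≤ max M 1 := le_max_right _ _
  have hc1 : (1:ℝ) ≤ (c+1) ^ γ := Real.one_le_rpow (by linarith) hγ.le
  have hkbd : ∀ k ∈ st, Ξ k ≤ (D * b' k * ((N:ℝ)/(ν k : ℝ))) ^ (ν k) := by
    intro k hk
    have hkJ : ¬ k < J := (Finset.mem_filter.mp hk).2
    have hksupp : k ∈ ν.support := (Finset.mem_filter.mp hk).1
    have hn1 : 1 ≤ ν k := hνsupp k hksupp
    have hn0 : (ν k : ℝ) ≠ 0 := by
      have : (0:ℝ) < (ν k:ℝ) := by exact_mod_cast hn1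
      exact this.ne'
    have hnR : (0:ℝ) < (ν k : ℝ) := by exact_mod_cast hn1
    have hNpos' : 0 < N := hNpos ⟨k, hk⟩
    have hNR : (0:ℝ) < (N:ℝ) := by exact_mod_cast hNpos'
    set r : ℝ := ε * (ν k : ℝ) / (b' k * (N : ℝ)) with hr
    have hrpos : 0 < r := by
      rw [hr]
      exact div_pos (by positivity) (mul_pos (hb'pos k) hNR)
    have hnn1 : (0:ℝ) ≤ (c+1) ^ γ := Real.rpow_nonneg (by linarith) _
    have hnn2 : (0:ℝ) ≤ ((2:ℝ) ^ γ) ^ (ν k) := pow_nonneg (Real.rpow_nonneg (by norm_num) _) _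
    have hnn3 : (0:ℝ) ≤ (b' k * (N:ℝ) / (ε * (ν k:ℝ))) ^ (ν k) :=
      pow_nonneg (div_nonneg (mul_nonneg (hb'pos k).le hNR.le) (by positivity)) _
    have hρval : ρ k = T + r := hρtail k hk
    have hrρ : r ≤ ρ k := by rw [hρval]; linarith
    -- bound ξ
    have hξbd : ξ (ρ k) ≤ max M 1 :=
      le_trans (hMT _ (hρT k hk)) (le_max_left _ _)
    -- bound rpow
    have hpow1 : (ρ k) ^ (-(ν k : ℝ)) ≤ (b' k * (N:ℝ) / (ε * (ν k:ℝ))) ^ (ν k) := by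
      rw [Real.rpow_neg (hρpos k).le, Real.rpow_natCast]
      have h1' : r ^ (ν k) ≤ (ρ k) ^ (ν k) := pow_le_pow_left₀ hrpos.le hrρ _
      have h2' : ((ρ k) ^ (ν k))⁻¹ ≤ (r ^ (ν k))⁻¹ := by
        apply inv_anti₀ (pow_pos hrpos _) h1'
      refine le_trans h2' ?_
      rw [← inv_pow, hr]
      apply le_of_eq
      congr 1
      rw [inv_div]
    -- bound poly factor
    have hpoly : (c * (ν k:ℝ) + 1) ^ γ ≤ (c+1) ^ γ * ((2:ℝ) ^ γ) ^ (ν k) := by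
      have h2n : (ν k : ℝ) + 1 ≤ (2:ℝ) ^ (ν k) := by
        exact_mod_cast Nat.lt_two_pow_self (n := ν k)
      have hle : c * (ν k:ℝ) + 1 ≤ (c+1) * (2:ℝ) ^ (ν k) := by
        nlinarith [pow_pos (show (0:ℝ) < 2 by norm_num) (ν k)]
      have h3 : (c * (ν k:ℝ) + 1) ^ γ ≤ ((c+1) * (2:ℝ) ^ (ν k)) ^ γ :=
        Real.rpow_le_rpow (by positivity) hle hγ.le
      refine le_trans h3 ?_
      rw [Real.mul_rpow (by linarith) (by positivity)]
      apply mul_le_mul_of_nonneg_left _ (by positivity)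
      rw [← Real.rpow_natCast (2:ℝ) (ν k), ← Real.rpow_mul (by norm_num), mul_comm,
        Real.rpow_mul (by norm_num), Real.rpow_natCast]
    -- combine
    have hcomb : Ξ k ≤ max M 1 * ((b' k * (N:ℝ) / (ε * (ν k:ℝ))) ^ (ν k))
        * ((c+1) ^ γ * ((2:ℝ) ^ γ) ^ (ν k)) := by
      rw [hΞ]
      apply mul_le_mul _ hpoly (Real.rpow_nonneg (by positivity) _)
        (mul_nonneg (le_trans zero_le_one hK1) hnn3)
      apply mul_le_mul hξbd hpow1 (Real.rpow_nonneg (hρpos k).le _)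
        (le_trans zero_le_one hK1)
    refine le_trans hcomb ?_
    have hM' : max M 1 ≤ (max M 1) ^ (ν k) := le_self_pow₀ (by linarith) (by omega)
    have hc' : (c+1) ^ γ ≤ ((c+1) ^ γ) ^ (ν k) := le_self_pow₀ (by linarith) (by omega)
    calc max M 1 * ((b' k * (N:ℝ) / (ε * (ν k:ℝ))) ^ (ν k)) * ((c+1) ^ γ * ((2:ℝ) ^ γ) ^ (ν k))
        ≤ (max M 1) ^ (ν k) * ((b' k * (N:ℝ) / (ε * (ν k:ℝ))) ^ (ν k))
          * (((c+1) ^ γ) ^ (ν k) * ((2:ℝ) ^ γ) ^ (ν k)) := by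
          apply mul_le_mul
          · apply mul_le_mul_of_nonneg_right hM' hnn3
          · apply mul_le_mul_of_nonneg_right hc' hnn2
          · exact mul_nonneg hnn1 hnn2
          · exact mul_nonneg (pow_nonneg (le_trans zero_le_one hK1) _) hnn3
      _ = ((max M 1) * (b' k * (N:ℝ) / (ε * (ν k:ℝ))) * ((c+1) ^ γ * (2:ℝ) ^ γ)) ^ (ν k) := by
          rw [mul_pow, mul_pow, mul_pow]
      _ = (D * b' k * ((N:ℝ)/(ν k : ℝ))) ^ (ν k) := by
          congr 1
          rw [hD]
          field_simp
  -- product over tail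
  have htail1 : ∏ k ∈ st, Ξ k ≤ ∏ k ∈ st, (D * b' k * ((N:ℝ)/(ν k : ℝ))) ^ (ν k) := by
    apply Finset.prod_le_prod
    · intro k hk
      exact hΞnn k (Finset.mem_filter.mp hk).1
    · exact hkbd
  have hD0 : 0 ≤ D := by
    rw [hD]
    apply div_nonneg _ hε.le
    apply mul_nonneg (mul_nonneg (le_trans zero_le_one hK1) (le_trans zero_le_one hc1)) _
    exact Real.rpow_nonneg (by norm_num) _
  have htail2 : ∏ k ∈ st, (D * b' k * ((N:ℝ)/(ν k : ℝ))) ^ (ν k)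
      = (∏ k ∈ st, (D * b' k) ^ (ν k)) * ∏ k ∈ st, ((N:ℝ)/(ν k : ℝ)) ^ (ν k) := by
    rw [← Finset.prod_mul_distrib]
    apply Finset.prod_congr rfl
    intro k _
    rw [mul_pow]
  -- multinomial step
  have hNfac : ∏ k ∈ st, ((N:ℝ)/(ν k : ℝ)) ^ (ν k)
      ≤ Real.exp 1 ^ N * (Nat.multinomial st ν : ℝ) := by
    have e1 : ∏ k ∈ st, ((N:ℝ)/(ν k : ℝ)) ^ (ν k)
        = (N:ℝ) ^ N / ∏ k ∈ st, ((ν k : ℝ)) ^ (ν k) := by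
      have : ∀ k ∈ st, ((N:ℝ)/(ν k : ℝ)) ^ (ν k) = (N:ℝ) ^ (ν k) / ((ν k:ℝ)) ^ (ν k) := by
        intro k _
        rw [div_pow]
      rw [Finset.prod_congr rfl this, Finset.prod_div_distrib, Finset.prod_pow_eq_pow_sum]
    rw [e1]
    have hfac1 : (N:ℝ) ^ N ≤ Real.exp 1 ^ N * (N.factorial : ℝ) := by
      have hs := Real.sum_le_exp_of_nonneg (Nat.cast_nonneg N) (N+1)
      have hterm : (N:ℝ) ^ N / (N.factorial : ℝ)
          ≤ ∑ i ∈ Finset.range (N+1), (N:ℝ) ^ i / (i.factorial : ℝ) := by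
        exact Finset.single_le_sum (f := fun i => (N:ℝ) ^ i / (i.factorial : ℝ))
          (fun i _ => by positivity) (Finset.self_mem_range_succ N)
      have := le_trans hterm hs
      rw [div_le_iff₀ (by positivity)] at this
      calc (N:ℝ) ^ N ≤ Real.exp (N:ℝ) * (N.factorial : ℝ) := this
        _ = Real.exp 1 ^ N * (N.factorial : ℝ) := by rw [Real.exp_one_pow]
    have hfac2 : ∏ k ∈ st, (((ν k).factorial : ℝ)) ≤ ∏ k ∈ st, ((ν k : ℝ)) ^ (ν k) := by
      apply Finset.prod_le_prod
      · intro k _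
        positivity
      · intro k _
        exact_mod_cast Nat.factorial_le_pow (ν k)
    have hmultspec : (∏ k ∈ st, (((ν k).factorial : ℝ))) * (Nat.multinomial st ν : ℝ)
        = (N.factorial : ℝ) := by
      have h := Nat.multinomial_spec st ν
      rw [hN]
      exact_mod_cast h
    have hprodfacpos : (0:ℝ) < ∏ k ∈ st, (((ν k).factorial : ℝ)) := by
      apply Finset.prod_pos
      intro k _
      exact_mod_cast Nat.factorial_pos (ν k)
    have hdd : (N:ℝ) ^ N / ∏ k ∈ st, ((ν k : ℝ)) ^ (ν k)
        ≤ (Real.exp 1 ^ N * (N.factorial : ℝ)) / ∏ k ∈ st, (((ν k).factorial : ℝ)) := by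
      apply div_le_div₀ (by positivity) hfac1 hprodfacpos hfac2
    refine le_trans hdd ?_
    rw [mul_div_assoc]
    apply mul_le_mul_of_nonneg_left _ (by positivity)
    rw [div_le_iff₀ hprodfacpos, mul_comm]
    rw [hmultspec]
  have hb'nn : ∀ k, 0 ≤ b' k := fun k => (hb'pos k).le
  have hcsnn : ∀ k, 0 ≤ Real.exp 1 * D * b' k := fun k =>
    mul_nonneg (mul_nonneg (Real.exp_pos 1).le hD0) (hb'nn k)
  have htail3 : ∏ k ∈ st, Ξ k
      ≤ (∏ k ∈ st, (Real.exp 1 * D * b' k) ^ (ν k)) * (Nat.multinomial st ν : ℝ) := by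
    refine le_trans (le_trans htail1 (le_of_eq htail2)) ?_
    have hWnn : (0:ℝ) ≤ ∏ k ∈ st, (D * b' k) ^ (ν k) :=
      Finset.prod_nonneg fun k _ => pow_nonneg (mul_nonneg hD0 (hb'nn k)) _
    calc (∏ k ∈ st, (D * b' k) ^ (ν k)) * ∏ k ∈ st, ((N:ℝ)/(ν k : ℝ)) ^ (ν k)
        ≤ (∏ k ∈ st, (D * b' k) ^ (ν k)) * (Real.exp 1 ^ N * (Nat.multinomial st ν : ℝ)) :=
          mul_le_mul_of_nonneg_left hNfac hWnn
      _ = ((∏ k ∈ st, (D * b' k) ^ (ν k)) * ∏ k ∈ st, Real.exp 1 ^ (ν k))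
            * (Nat.multinomial st ν : ℝ) := by
          rw [Finset.prod_pow_eq_pow_sum, ← hN]
          ring
      _ = (∏ k ∈ st, (Real.exp 1 * D * b' k) ^ (ν k)) * (Nat.multinomial st ν : ℝ) := by
          rw [← Finset.prod_mul_distrib]
          congr 1
          apply Finset.prod_congr rfl
          intro k _
          rw [← mul_pow]
          ring_nf
  have hΞnnst : ∀ k ∈ st, 0 ≤ Ξ k := fun k hk => hΞnn k (Finset.mem_filter.mp hk).1
  have htail4 : ∏ k ∈ st, (Ξ k) ^ p
      ≤ Gfun cs (Finsupp.filter (fun k => ¬ k < J) ν) := by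
    rw [Real.finset_prod_rpow _ _ hΞnnst p]
    have hmult1 : (1:ℝ) ≤ (Nat.multinomial st ν : ℝ) := by
      exact_mod_cast Nat.succ_le_of_lt (Nat.multinomial_pos st ν)
    have hWnn : (0:ℝ) ≤ ∏ k ∈ st, (Real.exp 1 * D * b' k) ^ (ν k) :=
      Finset.prod_nonneg fun k _ => pow_nonneg (hcsnn k) _
    have h5 := Real.rpow_le_rpow (Finset.prod_nonneg hΞnnst) htail3 hp0.le
    refine le_trans h5 ?_
    rw [Real.mul_rpow hWnn (le_trans zero_le_one hmult1)]
    have h6 : ((Nat.multinomial st ν : ℝ)) ^ p ≤ (Nat.multinomial st ν : ℝ) := by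
      calc ((Nat.multinomial st ν : ℝ)) ^ p ≤ ((Nat.multinomial st ν : ℝ)) ^ (1:ℝ) :=
            Real.rpow_le_rpow_of_exponent_le hmult1 hp1.le
        _ = (Nat.multinomial st ν : ℝ) := Real.rpow_one _
    have h7 : (∏ k ∈ st, (Real.exp 1 * D * b' k) ^ (ν k)) ^ p
        = ∏ k ∈ st, (cs k) ^ (ν k) := by
      rw [← Real.finset_prod_rpow _ _ (fun k _ => pow_nonneg (hcsnn k) _) p]
      apply Finset.prod_congr rfl
      intro k _
      rw [← Real.rpow_natCast (Real.exp 1 * D * b' k) (ν k), ← Real.rpow_mul (hcsnn k),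
        mul_comm ((ν k : ℝ)) p, Real.rpow_mul (hcsnn k), Real.rpow_natCast]
    rw [h7]
    unfold Gfun
    have hsupp : (Finsupp.filter (fun k => ¬ k < J) ν).support = st := by
      rw [Finsupp.support_filter, hst]
    rw [hsupp]
    have happ : ∀ k ∈ st, (Finsupp.filter (fun k => ¬ k < J) ν) k = ν k := by
      intro k hk
      exact Finsupp.filter_apply_pos _ _ (Finset.mem_filter.mp hk).2
    have hmeq : Nat.multinomial st (Finsupp.filter (fun k => ¬ k < J) ν) = Nat.multinomial st ν :=
      Nat.multinomial_congr happ
    have hpeq : ∏ k ∈ st, (cs k) ^ ((Finsupp.filter (fun k => ¬ k < J) ν) k)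
        = ∏ k ∈ st, (cs k) ^ (ν k) := by
      apply Finset.prod_congr rfl
      intro k hk
      rw [happ k hk]
    rw [hmeq, hpeq, mul_comm]
    exact mul_le_mul_of_nonneg_right h6
      (Finset.prod_nonneg fun k _ => pow_nonneg (Real.rpow_nonneg (hcsnn k) p) _)
  -- assemble
  have hheadnn : (0:ℝ) ≤ ∏ k ∈ Finset.range J, headf ξ δ c γ p (ν k) := by
    apply Finset.prod_nonneg
    intro k _
    unfold headf
    split
    · exact zero_le_one
    · refine Real.rpow_nonneg ?_ p
      refine mul_nonneg (mul_nonneg (hξnonneg _ (by linarith)) ?_) ?_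
      · exact Real.rpow_nonneg (by linarith) _
      · exact Real.rpow_nonneg (by positivity) _
  calc |d ν| ^ p ≤ (∏ k ∈ ν.support, Ξ k) ^ p := h1
    _ = ∏ k ∈ ν.support, (Ξ k) ^ p := h2
    _ = (∏ k ∈ ν.support.filter (fun k => k < J), (Ξ k) ^ p) * ∏ k ∈ st, (Ξ k) ^ p := hsplit
    _ = (∏ k ∈ Finset.range J, headf ξ δ c γ p (ν k)) * ∏ k ∈ st, (Ξ k) ^ p := by
        rw [hheadeq]
    _ ≤ (∏ k ∈ Finset.range J, headf ξ δ c γ p (ν k)) *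
          Gfun cs (Finsupp.filter (fun k => ¬ k < J) ν) :=
        mul_le_mul_of_nonneg_left htail4 hheadnn


/-- Lemma on abstract summability, part (a), first half.
If `0 < p < 1`, `ε, c, γ > 0`, `ξ : (1,∞) → [0,∞)` is continuous and bounded as `t → ∞`,
and `b : ℕ → [0,∞)` is `ℓ^p`-summable, then there is a constant `C` depending only on these
data such that every sequence `d` on the multi-indices `𝓕 = ℕ →₀ ℕ` satisfying
`|d 0| ≤ c` and the product bound for all admissible `ρ` is `ℓ^p`-summable with
`∑ |d ν|^p ≤ C^p`. -/
theorem stmt0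
    (p ε c γ : ℝ) (hp0 : 0 < p) (hp1 : p < 1) (hε : 0 < ε) (hc : 0 < c) (hγ : 0 < γ)
    (ξ : ℝ → ℝ) (hξcont : ContinuousOn ξ (Set.Ioi (1 : ℝ)))
    (hξnonneg : ∀ t : ℝ, 1 < t → 0 ≤ ξ t)
    (hξbdd : ∃ M T : ℝ, 0 ≤ M ∧ 1 < T ∧ ∀ t : ℝ, T ≤ t → ξ t ≤ M)
    (b : ℕ → ℝ) (hb : ∀ j, 0 ≤ b j) (hbp : Summable fun j => b j ^ p) :
    ∃ C : ℝ, 0 ≤ C ∧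
      ∀ d : (ℕ →₀ ℕ) → ℝ,
        |d 0| ≤ c →
        (∀ ν : ℕ →₀ ℕ, ν ≠ 0 →
          ∀ ρ : ℕ → ℝ, (∀ k, 1 ≤ ρ k) → (∀ k ∈ ν.support, 1 < ρ k) →
            Summable (fun j => ((ρ j + (ρ j)⁻¹) / 2 - 1) * b j) →
            (∑' j, ((ρ j + (ρ j)⁻¹) / 2 - 1) * b j) ≤ ε →
            |d ν| ≤ ∏ k ∈ ν.support,
              ξ (ρ k) * (ρ k) ^ (-(ν k : ℝ)) * (c * (ν k : ℝ) + 1) ^ γ) →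
        Summable (fun ν : ℕ →₀ ℕ => |d ν| ^ p) ∧
          (∑' ν : ℕ →₀ ℕ, |d ν| ^ p) ≤ C ^ p := by
  classical
  obtain ⟨M, T, hM0, hT, hMT⟩ := hξbdd
  have hbsum : Summable b := summable_of_rpow_summable hp0 hp1 b hb hbp
  set b' : ℕ → ℝ := fun j => b j + (2⁻¹ : ℝ) ^ j with hb'def
  have hb'pos : ∀ k, 0 < b' k := fun k => add_pos_of_nonneg_of_pos (hb k) (by positivity)
  have hbb' : ∀ k, b k ≤ b' k := fun k => le_add_of_nonneg_right (by positivity)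
  have hb'p : Summable (fun j => b' j ^ p) := by
    have hbound : ∀ j, b' j ^ p ≤ b j ^ p + ((2⁻¹:ℝ) ^ p) ^ j := by
      intro j
      have h1 := real_add_rpow_le (hb j) (by positivity : (0:ℝ) ≤ (2⁻¹:ℝ) ^ j) hp0.le hp1.le
      have h2 : ((2⁻¹:ℝ) ^ j) ^ p = ((2⁻¹:ℝ) ^ p) ^ j := by
        rw [← Real.rpow_natCast (2⁻¹:ℝ) j, ← Real.rpow_mul (by norm_num),
          mul_comm, Real.rpow_mul (by norm_num), Real.rpow_natCast]
      rw [← h2]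
      exact h1
    apply Summable.of_nonneg_of_le (fun j => Real.rpow_nonneg (hb'pos j).le p) hbound
    apply Summable.add hbp
    apply summable_geometric_of_lt_one (Real.rpow_nonneg (by norm_num) p)
    exact Real.rpow_lt_one (by norm_num) (by norm_num) hp0
  have hK1 : (1:ℝ) ≤ max M 1 := le_max_right _ _
  have hc1 : (1:ℝ) ≤ (c+1) ^ γ := Real.one_le_rpow (by linarith) hγ.le
  set D : ℝ := max M 1 * (c+1) ^ γ * 2 ^ γ / ε with hD
  have hD0 : 0 ≤ D := by
    rw [hD]
    apply div_nonneg _ hε.le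
    apply mul_nonneg (mul_nonneg (le_trans zero_le_one hK1) (le_trans zero_le_one hc1))
    exact Real.rpow_nonneg (by norm_num) _
  set cs : ℕ → ℝ := fun k => (Real.exp 1 * D * b' k) ^ p with hcs
  have hcsbase : ∀ k, 0 ≤ Real.exp 1 * D * b' k := fun k =>
    mul_nonneg (mul_nonneg (Real.exp_pos 1).le hD0) (hb'pos k).le
  have hcsnn : ∀ k, 0 ≤ cs k := fun k => Real.rpow_nonneg (hcsbase k) p
  have hcssum : Summable cs := by
    have heq : ∀ k, cs k = (Real.exp 1 * D) ^ p * b' k ^ p := by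
      intro k
      rw [hcs]
      exact Real.mul_rpow (mul_nonneg (Real.exp_pos 1).le hD0) (hb'pos k).le
    exact (funext heq : cs = _) ▸ hb'p.mul_left _
  -- choose J
  obtain ⟨J, hJ1, hJ2⟩ : ∃ J : ℕ, (T - 1) * (∑' i, b (i + J)) ≤ ε / 2 ∧
      (∑' i, cs (i + J)) ≤ 1 / 2 := by
    have hT1 : 0 < T - 1 := by linarith
    have h1 := (tendsto_sum_nat_add b).eventually
      (gt_mem_nhds (show (0:ℝ) < (ε/2) / (T-1) by positivity))
    have h2 := (tendsto_sum_nat_add cs).eventually (gt_mem_nhds (show (0:ℝ) < 1/2 by norm_num))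
    obtain ⟨J, hJ⟩ := (h1.and h2).exists
    refine ⟨J, ?_, hJ.2.le⟩
    have := hJ.1
    rw [lt_div_iff₀ hT1] at this
    linarith [this]
  have htailb : ∀ s : Finset ℕ, (∀ k ∈ s, J ≤ k) → (T - 1) * ∑ k ∈ s, b k ≤ ε / 2 := by
    intro s hs
    have h1 := sum_tail_le b hb hbsum J s hs
    have hT1 : (0:ℝ) ≤ T - 1 := by linarith
    calc (T - 1) * ∑ k ∈ s, b k ≤ (T - 1) * (∑' i, b (i + J)) :=
          mul_le_mul_of_nonneg_left h1 hT1
      _ ≤ ε / 2 := hJ1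
  set q : ℝ := ∑' i, cs (i + J) with hq
  have hq0 : 0 ≤ q := tsum_nonneg fun i => hcsnn _
  have htailc : ∀ s : Finset ℕ, (∀ k ∈ s, J ≤ k) → ∑ k ∈ s, cs k ≤ q :=
    fun s hs => sum_tail_le cs hcsnn hcssum J s hs
  have hBJ : (0:ℝ) ≤ ∑ k ∈ Finset.range J, b k := Finset.sum_nonneg fun k _ => hb k
  set δ : ℝ := ε / (2 * (1 + ∑ k ∈ Finset.range J, b k)) with hδdef
  have hδ : 0 < δ := div_pos hε (by linarith)
  have hheadb : δ * (∑ k ∈ Finset.range J, b k) ≤ ε / 2 := by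
    rw [hδdef, div_mul_eq_mul_div, div_le_iff₀ (by linarith)]
    nlinarith [hε, hBJ]
  set h : ℕ → ℝ := headf ξ δ c γ p with hh
  have hξδ : 0 ≤ ξ (1 + δ) := hξnonneg _ (by linarith)
  have hh0 : h 0 = 1 := by simp [hh, headf]
  have hhnn : ∀ n, 0 ≤ h n := by
    intro n
    rw [hh]
    unfold headf
    split
    · exact zero_le_one
    · refine Real.rpow_nonneg ?_ p
      refine mul_nonneg (mul_nonneg hξδ ?_) ?_
      · exact Real.rpow_nonneg (by linarith) _
      · exact Real.rpow_nonneg (by positivity) _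
  have hhsum : Summable h := by
    set r : ℝ := (1 + δ) ^ (-p) with hr
    have hr0 : 0 < r := Real.rpow_pos_of_pos (by linarith) _
    have hr1 : r < 1 := Real.rpow_lt_one_of_one_lt_of_neg (by linarith) (by linarith)
    set A : ℝ := max 1 (ξ (1+δ) ^ p * (c+1) ^ (γ*p)) with hA
    have hA1 : 1 ≤ A := le_max_left _ _
    apply Summable.of_nonneg_of_le hhnn (fun n => ?_)
      ((summable_geom_poly hr0 hr1 (mul_nonneg hγ.le hp0.le)).mul_left A)
    rcases Nat.eq_zero_or_pos n with rfl | hn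
    · rw [hh0]
      simpa using hA1
    · have hn' : n ≠ 0 := hn.ne'
      have hnn1 : (0:ℝ) ≤ (1+δ) ^ (-(n:ℝ)) := Real.rpow_nonneg (by linarith) _
      have hnn2 : (0:ℝ) ≤ (c*(n:ℝ)+1) ^ γ := Real.rpow_nonneg (by positivity) _
      have e0 : h n = ξ (1+δ) ^ p * ((1+δ) ^ (-(n:ℝ))) ^ p * ((c*(n:ℝ)+1) ^ γ) ^ p := by
        rw [hh]
        unfold headf
        rw [if_neg hn']
        rw [Real.mul_rpow (mul_nonneg hξδ hnn1) hnn2, Real.mul_rpow hξδ hnn1]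
      have e2 : ((1+δ) ^ (-(n:ℝ))) ^ p = r ^ n := by
        rw [← Real.rpow_natCast r n, hr, ← Real.rpow_mul (by linarith : (0:ℝ) ≤ 1+δ),
          ← Real.rpow_mul (by linarith : (0:ℝ) ≤ 1+δ)]
        congr 1
        ring
      have e3 : ((c*(n:ℝ)+1) ^ γ) ^ p ≤ (c+1) ^ (γ*p) * ((n:ℝ)+1) ^ (γ*p) := by
        rw [← Real.rpow_mul (by positivity : (0:ℝ) ≤ c*(n:ℝ)+1)]
        have hle : c*(n:ℝ)+1 ≤ (c+1)*((n:ℝ)+1) := by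
          nlinarith [Nat.cast_nonneg (α := ℝ) n]
        calc (c*(n:ℝ)+1) ^ (γ*p) ≤ ((c+1)*((n:ℝ)+1)) ^ (γ*p) :=
              Real.rpow_le_rpow (by positivity) hle (mul_nonneg hγ.le hp0.le)
          _ = (c+1) ^ (γ*p) * ((n:ℝ)+1) ^ (γ*p) :=
              Real.mul_rpow (by linarith) (by positivity)
      rw [e0, e2]
      have hfin : ξ (1+δ) ^ p * r ^ n * ((c*(n:ℝ)+1) ^ γ) ^ p
          ≤ (ξ (1+δ) ^ p * (c+1) ^ (γ*p)) * (((n:ℝ)+1) ^ (γ*p) * r ^ n) := by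
        calc ξ (1+δ) ^ p * r ^ n * ((c*(n:ℝ)+1) ^ γ) ^ p
            ≤ ξ (1+δ) ^ p * r ^ n * ((c+1) ^ (γ*p) * ((n:ℝ)+1) ^ (γ*p)) := by
              apply mul_le_mul_of_nonneg_left e3
              exact mul_nonneg (Real.rpow_nonneg hξδ p) (pow_nonneg hr0.le n)
          _ = (ξ (1+δ) ^ p * (c+1) ^ (γ*p)) * (((n:ℝ)+1) ^ (γ*p) * r ^ n) := by ring
      refine le_trans hfin ?_
      apply mul_le_mul_of_nonneg_right (le_max_right _ _)
      exact mul_nonneg (Real.rpow_nonneg (by positivity) _) (pow_nonneg hr0.le n)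
  set Sh : ℝ := ∑' n, h n with hShdef
  have hSh1 : (1:ℝ) ≤ Sh := hh0 ▸ Summable.le_tsum hhsum 0 (fun n _ => hhnn n)
  have hSh0 : (0:ℝ) ≤ Sh := le_trans zero_le_one hSh1
  set Cp : ℝ := c ^ p + Sh ^ J * 2 with hCpdef
  have hCp0 : 0 ≤ Cp :=
    add_nonneg (Real.rpow_nonneg hc.le p) (mul_nonneg (pow_nonneg hSh0 J) (by norm_num))
  refine ⟨Cp ^ p⁻¹, Real.rpow_nonneg hCp0 _, ?_⟩
  intro d hd0 hd
  have hCpp : (Cp ^ p⁻¹) ^ p = Cp := Real.rpow_inv_rpow hCp0 hp0.ne'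
  set F : (ℕ →₀ ℕ) → ℝ := fun a => ∏ k ∈ Finset.range J, h (a k) with hF
  have hFnn : ∀ a, 0 ≤ F a := fun a => Finset.prod_nonneg fun k _ => hhnn _
  set fh : (ℕ →₀ ℕ) → (ℕ →₀ ℕ) := fun ν => Finsupp.filter (fun k => k < J) ν with hfh
  set ft : (ℕ →₀ ℕ) → (ℕ →₀ ℕ) := fun ν => Finsupp.filter (fun k => ¬ k < J) ν with hft
  have hkey : ∀ u : Finset (ℕ →₀ ℕ), ∑ ν ∈ u, |d ν| ^ p ≤ Cp := by
    intro u
    have hstep : ∑ ν ∈ u, |d ν| ^ p ≤ c ^ p + ∑ ν ∈ u.erase 0, |d ν| ^ p := by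
      by_cases h0 : (0 : ℕ →₀ ℕ) ∈ u
      · rw [← Finset.add_sum_erase u _ h0]
        have : |d 0| ^ p ≤ c ^ p := Real.rpow_le_rpow (abs_nonneg _) hd0 hp0.le
        linarith
      · rw [Finset.erase_eq_of_notMem h0]
        have : (0:ℝ) ≤ c ^ p := Real.rpow_nonneg hc.le p
        linarith
    have hS2 : ∑ ν ∈ u.erase 0, |d ν| ^ p ≤ Sh ^ J * 2 := by
      have hcore : ∀ ν ∈ u.erase 0, |d ν| ^ p ≤ F (fh ν) * Gfun cs (ft ν) := by
        intro ν hν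
        have hνne : ν ≠ 0 := Finset.ne_of_mem_erase hν
        have hb1 := core_bound p ε c γ hp0 hp1 hε hc hγ ξ hξnonneg M T hT hMT b hb b'
          hb'pos hbb' J δ hδ hheadb htailb d hd ν hνne
        refine le_trans hb1 (le_of_eq ?_)
        congr 1
        apply Finset.prod_congr rfl
        intro k hk
        exact (congrArg (headf ξ δ c γ p)
          (Finsupp.filter_apply_pos (fun k => k < J) ν (Finset.mem_range.mp hk))).symm
      refine le_trans (Finset.sum_le_sum hcore) ?_
      have hinj : ∀ a ∈ u.erase 0, ∀ a' ∈ u.erase 0, fh a = fh a' → ft a = ft a' → a = a' := by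
        intro a _ a' _ h1 h2
        have ha := Finsupp.filter_pos_add_filter_neg a (fun k => k < J)
        have ha' := Finsupp.filter_pos_add_filter_neg a' (fun k => k < J)
        rw [← ha, ← ha']
        rw [hfh] at h1
        rw [hft] at h2
        simp only at h1 h2
        rw [h1, h2]
      have hP := pair_sum_le (u.erase 0) fh ft F (Gfun cs) hFnn
        (Gfun_nonneg cs hcsnn) hinj
      refine le_trans hP ?_
      have hbound1 : ∑ x ∈ (u.erase 0).image fh, F x ≤ Sh ^ J := by
        have := head_sum_le h hh0 hhnn hhsum (Finset.range J) ((u.erase 0).image fh) ?_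
        · simpa [Finset.card_range] using this
        · intro a ha
          simp only [Finset.mem_image] at ha
          obtain ⟨ν, _, rfl⟩ := ha
          rw [hfh]
          simp only
          rw [Finsupp.support_filter]
          intro k hk
          simp only [Finset.coe_filter, Set.mem_setOf_eq] at hk
          simp only [Finset.coe_range, Set.mem_Iio]
          exact hk.2
      have hbound2 : ∑ y ∈ (u.erase 0).image ft, Gfun cs y ≤ 2 := by
        set St := (u.erase 0).image ft with hSt
        set Nmax : ℕ := 1 + St.sup (fun m => m.sum fun _ n => n) with hNmax
        have hgroup : ∑ m ∈ St, Gfun cs m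
            = ∑ N ∈ Finset.range Nmax, ∑ m ∈ St.filter (fun m => (m.sum fun _ n => n) = N),
                Gfun cs m := by
          symm
          apply Finset.sum_fiberwise_of_maps_to
          intro m hm
          apply Finset.mem_range.mpr
          have h1 := Finset.le_sup (f := fun m : ℕ →₀ ℕ => m.sum fun _ n => n) hm
          have hle : (m.sum fun _ n => n) ≤ St.sup (fun m => m.sum fun _ n => n) := h1
          omega
        rw [hgroup]
        have hinner : ∀ N ∈ Finset.range Nmax,
            ∑ m ∈ St.filter (fun m => (m.sum fun _ n => n) = N), Gfun cs m ≤ q ^ N := by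
          intro N _
          have happly := multinom_sum_le cs hcsnn q J N htailc
            (St.filter (fun m => (m.sum fun _ n => n) = N)) ?_
          · refine le_trans (le_of_eq ?_) happly
            apply Finset.sum_congr rfl
            intro m _
            rfl
          · intro m hm
            rcases Finset.mem_filter.mp hm with ⟨hm1, hm2⟩
            constructor
            · rw [hSt] at hm1
              simp only [Finset.mem_image] at hm1
              obtain ⟨ν, _, rfl⟩ := hm1
              intro k hk
              rw [hft] at hk
              simp only at hk
              rw [Finsupp.support_filter] at hk
              have := (Finset.mem_filter.mp hk).2
              omega
            · exact hm2
        refine le_trans (Finset.sum_le_sum hinner) ?_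
        have hhalf : ∀ N ∈ Finset.range Nmax, q ^ N ≤ (1/2 : ℝ) ^ N := by
          intro N _
          exact pow_le_pow_left₀ hq0 hJ2 N
        refine le_trans (Finset.sum_le_sum hhalf) ?_
        have := sum_geometric_two_le Nmax
        simpa using this
      have hG0 : (0:ℝ) ≤ ∑ y ∈ (u.erase 0).image ft, Gfun cs y :=
        Finset.sum_nonneg fun y _ => Gfun_nonneg cs hcsnn y
      exact mul_le_mul hbound1 hbound2 hG0 (pow_nonneg hSh0 J)
    rw [hCpdef]
    linarith
  have hsummable : Summable (fun ν : ℕ →₀ ℕ => |d ν| ^ p) :=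
    summable_of_sum_le (fun ν => Real.rpow_nonneg (abs_nonneg _) p) hkey
  refine ⟨hsummable, ?_⟩
  rw [hCpp]
  exact Summable.tsum_le_of_sum_le hsummable hkey
end

section
/- Let c̃ > 0, γ̃ > 0, ε > 0, d ∈ ℕ, and let b̃ : ℕ → (0,∞) be a nonincreasing sequence. Let β ≥ e · (max{c̃, 1} + 1)^{γ̃}. For ν ∈ 𝓕 set M(ν) = Σ_{j > d} ν_j and B(ν) = ∏_{j > d, ν_j ≠ 0} (c̃ ν_j + 1)^{γ̃} · ( β + ε ν_j / (4 b̃_j M(ν)) )^{−ν_j}, with the empty product equal to 1. Then B(ν + e_i) ≤ B(ν) for every ν ∈ 𝓕 and every i > d. -/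
open scoped BigOperators

/-- `M(ν) = ∑_{j > d} ν_j` for a finitely supported multi-index `ν`. -/
def tailSum (d : ℕ) (ν : ℕ →₀ ℕ) : ℕ :=
  ∑ j ∈ ν.support.filter (fun j => d < j), ν j

/-- The product
`B(ν) = ∏_{j > d, ν_j ≠ 0} (c̃ ν_j + 1)^γ̃ · (β + ε ν_j / (4 b̃_j M(ν)))^{-ν_j}`
(with the empty product equal to `1`). -/
noncomputable def Bprod (ctil γtil ε : ℝ) (d : ℕ) (btil : ℕ → ℝ) (β : ℝ)
    (ν : ℕ →₀ ℕ) : ℝ :=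
  ∏ j ∈ ν.support.filter (fun j => d < j),
    (ctil * (ν j : ℝ) + 1) ^ γtil *
      (β + ε * (ν j : ℝ) / (4 * btil j * (tailSum d ν : ℝ))) ^ (-(ν j : ℝ))

private lemma inv_pow_le_aux {x y k : ℝ} (hx : 0 < x) (hy : 0 < y) (h : y ≤ k * x) (n : ℕ) :
    (x ^ n)⁻¹ ≤ k ^ n * (y ^ n)⁻¹ := by
  have h1 : y ^ n ≤ k ^ n * x ^ n := by
    rw [← mul_pow]; exact pow_le_pow_left₀ hy.le h n
  have hxn := pow_pos hx n
  have hyn := pow_pos hy n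
  rw [inv_eq_one_div, ← div_eq_mul_inv, div_le_div_iff₀ hxn hyn]
  linarith

private lemma aux_ne (c γ ε b β : ℝ) (hc : 0 < c) (hγ : 0 < γ) (hε : 0 < ε) (hb : 0 < b)
    (hβ : 0 < β) (M n : ℕ) (hM : 1 ≤ M) :
    (c * (n : ℝ) + 1) ^ γ * (β + ε * (n : ℝ) / (4 * b * ((M : ℝ) + 1))) ^ (-(n : ℝ)) ≤
      (1 + 1 / (M : ℝ)) ^ n *
        ((c * (n : ℝ) + 1) ^ γ * (β + ε * (n : ℝ) / (4 * b * (M : ℝ))) ^ (-(n : ℝ))) := by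
  have hMpos : (0:ℝ) < M := by exact_mod_cast hM
  have hq' : 0 < β + ε * (n : ℝ) / (4 * b * ((M : ℝ) + 1)) := by positivity
  have hq : 0 < β + ε * (n : ℝ) / (4 * b * (M : ℝ)) := by positivity
  have hM0 : (M:ℝ) ≠ 0 := hMpos.ne'
  have hM1 : (M:ℝ) + 1 ≠ 0 := by positivity
  have hb0 : b ≠ 0 := hb.ne'
  have E : (1 + 1 / (M:ℝ)) * (β + ε * (n : ℝ) / (4 * b * ((M : ℝ) + 1)))
      = β + β / (M:ℝ) + ε * (n : ℝ) / (4 * b * (M : ℝ)) := by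
    field_simp
  have key : β + ε * (n : ℝ) / (4 * b * (M : ℝ)) ≤
      (1 + 1 / (M:ℝ)) * (β + ε * (n : ℝ) / (4 * b * ((M : ℝ) + 1))) := by
    rw [E]
    have : 0 ≤ β / (M:ℝ) := by positivity
    linarith
  rw [Real.rpow_neg hq'.le, Real.rpow_neg hq.le, Real.rpow_natCast, Real.rpow_natCast]
  have hA : (0:ℝ) < (c * (n : ℝ) + 1) ^ γ := Real.rpow_pos_of_pos (by positivity) γ
  have h2 := inv_pow_le_aux hq' hq key n
  calc (c * (n : ℝ) + 1) ^ γ * ((β + ε * (n : ℝ) / (4 * b * ((M : ℝ) + 1))) ^ n)⁻¹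
      ≤ (c * (n : ℝ) + 1) ^ γ *
          ((1 + 1 / (M:ℝ)) ^ n * ((β + ε * (n : ℝ) / (4 * b * (M : ℝ))) ^ n)⁻¹) :=
        mul_le_mul_of_nonneg_left h2 hA.le
    _ = (1 + 1 / (M:ℝ)) ^ n *
          ((c * (n : ℝ) + 1) ^ γ * ((β + ε * (n : ℝ) / (4 * b * (M : ℝ))) ^ n)⁻¹) := by ring

private lemma aux_i (c γ ε b β : ℝ) (hc : 0 < c) (hγ : 0 < γ) (hε : 0 < ε) (hb : 0 < b)
    (hβ : Real.exp 1 * (max c 1 + 1) ^ γ ≤ β) (M m : ℕ) (hm : m ≤ M) :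
    (c * ((m : ℝ) + 1) + 1) ^ γ *
        (β + ε * ((m : ℝ) + 1) / (4 * b * ((M : ℝ) + 1))) ^ (-((m : ℝ) + 1)) ≤
      (Real.exp 1)⁻¹ *
        ((c * (m : ℝ) + 1) ^ γ * (β + ε * (m : ℝ) / (4 * b * (M : ℝ))) ^ (-(m : ℝ))) := by
  have hepos := Real.exp_pos 1
  have hβpos : 0 < β := lt_of_lt_of_le (by positivity) hβ
  have hq : 0 < β + ε * (m : ℝ) / (4 * b * (M : ℝ)) := by positivity
  have hq' : 0 < β + ε * ((m : ℝ) + 1) / (4 * b * ((M : ℝ) + 1)) := by positivity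
  have hle1 : β ≤ β + ε * ((m : ℝ) + 1) / (4 * b * ((M : ℝ) + 1)) :=
    le_add_of_nonneg_right (by positivity)
  have hle2 : β + ε * (m : ℝ) / (4 * b * (M : ℝ)) ≤
      β + ε * ((m : ℝ) + 1) / (4 * b * ((M : ℝ) + 1)) := by
    rcases Nat.eq_zero_or_pos M with h0 | hMpos
    · have hm0 : m = 0 := le_antisymm (h0 ▸ hm) (Nat.zero_le m)
      subst hm0; subst h0
      norm_num
      positivity
    · have hMR : (0:ℝ) < M := by exact_mod_cast hMpos
      apply add_le_add (le_refl β)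
      rw [div_le_div_iff₀ (by positivity) (by positivity)]
      have hmM : (m:ℝ) ≤ M := by exact_mod_cast hm
      nlinarith [mul_nonneg (mul_nonneg hε.le hb.le) (sub_nonneg.2 hmM)]
  have hcast : ((m:ℝ) + 1) = ((m + 1 : ℕ) : ℝ) := by push_cast; ring
  rw [hcast] at hle2 hq' hle1 ⊢
  rw [Real.rpow_neg hq'.le, Real.rpow_neg hq.le, Real.rpow_natCast, Real.rpow_natCast]
  have hA : (c * ((m + 1 : ℕ) : ℝ) + 1) ^ γ ≤ (max c 1 + 1) ^ γ * (c * (m : ℝ) + 1) ^ γ := by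
    rw [← Real.mul_rpow (by positivity) (by positivity)]
    apply Real.rpow_le_rpow (by positivity) ?_ hγ.le
    have h1 : c ≤ max c 1 := le_max_left c 1
    have h2 : (0:ℝ) ≤ max c 1 := le_trans zero_le_one (le_max_right c 1)
    have h3 : (0:ℝ) ≤ (m:ℝ) := Nat.cast_nonneg m
    push_cast
    nlinarith [mul_nonneg (mul_nonneg h2 hc.le) h3]
  have hB : β * (β + ε * (m : ℝ) / (4 * b * (M : ℝ))) ^ m ≤
      (β + ε * ((m + 1 : ℕ) : ℝ) / (4 * b * ((M : ℝ) + 1))) ^ (m + 1) := by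
    rw [pow_succ, mul_comm]
    exact mul_le_mul (pow_le_pow_left₀ hq.le hle2 m) hle1 hβpos.le (pow_nonneg hq'.le m)
  have hinv : ((β + ε * ((m + 1 : ℕ) : ℝ) / (4 * b * ((M : ℝ) + 1))) ^ (m + 1))⁻¹ ≤
      (β * (β + ε * (m : ℝ) / (4 * b * (M : ℝ))) ^ m)⁻¹ :=
    inv_anti₀ (by positivity) hB
  have hP : (max c 1 + 1) ^ γ * β⁻¹ ≤ (Real.exp 1)⁻¹ := by
    rw [← div_eq_mul_inv, div_le_iff₀ hβpos, inv_mul_eq_div, le_div_iff₀ hepos]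
    linear_combination hβ
  calc (c * ((m + 1 : ℕ) : ℝ) + 1) ^ γ *
        ((β + ε * ((m + 1 : ℕ) : ℝ) / (4 * b * ((M : ℝ) + 1))) ^ (m + 1))⁻¹
      ≤ ((max c 1 + 1) ^ γ * (c * (m : ℝ) + 1) ^ γ) *
          (β * (β + ε * (m : ℝ) / (4 * b * (M : ℝ))) ^ m)⁻¹ :=
        mul_le_mul hA hinv (by positivity) (by positivity)
    _ = ((max c 1 + 1) ^ γ * β⁻¹) *
          ((c * (m : ℝ) + 1) ^ γ * (((β + ε * (m : ℝ) / (4 * b * (M : ℝ))) ^ m))⁻¹) := by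
        rw [mul_inv]; ring
    _ ≤ (Real.exp 1)⁻¹ *
          ((c * (m : ℝ) + 1) ^ γ * (((β + ε * (m : ℝ) / (4 * b * (M : ℝ))) ^ m))⁻¹) :=
        mul_le_mul_of_nonneg_right hP (by positivity)

/-- monotonicity of the majorizing sequence `B̃_F`. If `c̃, γ̃, ε > 0`,
`b̃ : ℕ → (0,∞)` is nonincreasing and `β ≥ e · (max{c̃,1} + 1)^γ̃`, then incrementing any
coordinate `i > d` of a multi-index `ν` does not increase `B(ν)`. -/
theorem stmt15 (ctil γtil ε : ℝ) (hc : 0 < ctil) (hγ : 0 < γtil) (hε : 0 < ε)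
    (d : ℕ) (btil : ℕ → ℝ) (hbpos : ∀ j, 0 < btil j) (hbmono : Antitone btil)
    (β : ℝ) (hβ : Real.exp 1 * (max ctil 1 + 1) ^ γtil ≤ β) :
    ∀ ν : ℕ →₀ ℕ, ∀ i : ℕ, d < i →
      Bprod ctil γtil ε d btil β (ν + Finsupp.single i 1)
        ≤ Bprod ctil γtil ε d btil β ν := by
  classical
  have hepos := Real.exp_pos 1
  have hβpos : 0 < β := lt_of_lt_of_le (by positivity) hβ
  intro ν i hi
  set ν' := ν + Finsupp.single i 1 with hν'def
  set M := tailSum d ν with hMdef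
  have hν'i : ν' i = ν i + 1 := by simp [hν'def]
  have hν'ne : ∀ j, j ≠ i → ν' j = ν j := by
    intro j hj
    simp [hν'def, Finsupp.single_apply, (Ne.symm hj : i ≠ j)]
  set T := ν.support.filter (fun j => d < j) with hTdef
  set S := ν'.support.filter (fun j => d < j) with hSdef
  have hST : S = insert i T := by
    ext j
    simp only [hSdef, hTdef, Finset.mem_filter, Finsupp.mem_support_iff, Finset.mem_insert]
    by_cases hj : j = i
    · subst hj; simp [hν'i, hi]
    · rw [hν'ne j hj]
      constructor
      · rintro ⟨h1, h2⟩; exact Or.inr ⟨h1, h2⟩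
      · rintro (h | ⟨h1, h2⟩)
        · exact absurd h hj
        · exact ⟨h1, h2⟩
  have hTsub : T ⊆ S := hST ▸ Finset.subset_insert _ _
  have hiS : i ∈ S := hST ▸ Finset.mem_insert_self _ _
  have hzero : ∀ j ∈ S, j ∉ T → ν j = 0 := by
    intro j hjS hjT
    by_contra h
    exact hjT (Finset.mem_filter.mpr ⟨Finsupp.mem_support_iff.mpr h, (Finset.mem_filter.mp hjS).2⟩)
  have hsumS : ∑ j ∈ S, ν j = M := by
    rw [hMdef]
    exact (Finset.sum_subset hTsub (fun j h1 h2 => hzero j h1 h2)).symm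
  have hνjM : ∀ j ∈ S, ν j ≤ M := by
    intro j hjS
    rw [← hsumS]
    exact Finset.single_le_sum (fun k _ => Nat.zero_le (ν k)) hjS
  have hM' : tailSum d ν' = M + 1 := by
    have h2 : ∀ j, ν' j = ν j + (if i = j then 1 else 0) := by
      intro j; simp [hν'def, Finsupp.single_apply]
    have h1 : tailSum d ν' = ∑ j ∈ S, ν' j := rfl
    rw [h1]
    calc ∑ j ∈ S, ν' j = ∑ j ∈ S, (ν j + if i = j then 1 else 0) :=
          Finset.sum_congr rfl (fun j _ => h2 j)
      _ = (∑ j ∈ S, ν j) + ∑ j ∈ S, (if i = j then 1 else 0) := Finset.sum_add_distrib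
      _ = M + 1 := by rw [hsumS, Finset.sum_ite_eq S i (fun _ => 1), if_pos hiS]
  have hBν : Bprod ctil γtil ε d btil β ν =
      ∏ j ∈ S, (ctil * (ν j : ℝ) + 1) ^ γtil *
        (β + ε * (ν j : ℝ) / (4 * btil j * (M : ℝ))) ^ (-(ν j : ℝ)) := by
    have h0 : Bprod ctil γtil ε d btil β ν =
        ∏ j ∈ T, (ctil * (ν j : ℝ) + 1) ^ γtil *
          (β + ε * (ν j : ℝ) / (4 * btil j * (M : ℝ))) ^ (-(ν j : ℝ)) := rfl
    rw [h0]
    refine Finset.prod_subset hTsub (fun j h1 h2 => ?_)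
    simp [hzero j h1 h2, Real.one_rpow, Real.rpow_zero]
  have hBν' : Bprod ctil γtil ε d btil β ν' =
      ∏ j ∈ S, (ctil * (ν' j : ℝ) + 1) ^ γtil *
        (β + ε * (ν' j : ℝ) / (4 * btil j * ((M : ℝ) + 1))) ^ (-(ν' j : ℝ)) := by
    have h0 : Bprod ctil γtil ε d btil β ν' =
        ∏ j ∈ S, (ctil * (ν' j : ℝ) + 1) ^ γtil *
          (β + ε * (ν' j : ℝ) / (4 * btil j * ((tailSum d ν' : ℕ) : ℝ))) ^ (-(ν' j : ℝ)) := rfl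
    rw [h0, hM']
    simp only [Nat.cast_add, Nat.cast_one]
  set K : ℕ → ℝ := fun j => if j = i then (Real.exp 1)⁻¹ else (1 + 1 / (M : ℝ)) ^ (ν j)
    with hKdef
  have hK1 : ∏ j ∈ S, K j ≤ 1 := by
    rw [← Finset.mul_prod_erase S K hiS]
    have h1 : K i = (Real.exp 1)⁻¹ := by simp [hKdef]
    have h2 : ∏ j ∈ S.erase i, K j = (1 + 1 / (M : ℝ)) ^ (∑ j ∈ S.erase i, ν j) := by
      rw [← Finset.prod_pow_eq_pow_sum]
      exact Finset.prod_congr rfl (fun j hj => by simp [hKdef, Finset.ne_of_mem_erase hj])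
    rw [h1, h2]
    have hs : ∑ j ∈ S.erase i, ν j ≤ M := by
      rw [← hsumS]
      exact Finset.sum_le_sum_of_subset (Finset.erase_subset i S)
    have h1M : (1:ℝ) ≤ 1 + 1 / (M : ℝ) := le_add_of_nonneg_right (by positivity)
    have h3 : (1 + 1 / (M : ℝ)) ^ (∑ j ∈ S.erase i, ν j) ≤ (1 + 1 / (M : ℝ)) ^ M :=
      pow_le_pow_right₀ h1M hs
    have h4 : (1 + 1 / (M : ℝ)) ^ M ≤ Real.exp 1 := by
      rcases Nat.eq_zero_or_pos M with h0 | hMpos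
      · rw [h0]
        norm_num
      · have hMR : (0:ℝ) < M := by exact_mod_cast hMpos
        have h5 : 1 + 1 / (M : ℝ) ≤ Real.exp (1 / (M : ℝ)) := by
          have := Real.add_one_le_exp (1 / (M : ℝ)); linarith
        calc (1 + 1 / (M : ℝ)) ^ M ≤ (Real.exp (1 / (M : ℝ))) ^ M :=
              pow_le_pow_left₀ (by positivity) h5 M
          _ = Real.exp ((M : ℝ) * (1 / (M : ℝ))) := (Real.exp_nat_mul _ M).symm
          _ = Real.exp 1 := by rw [mul_one_div, div_self hMR.ne']
    calc (Real.exp 1)⁻¹ * (1 + 1 / (M : ℝ)) ^ (∑ j ∈ S.erase i, ν j)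
        ≤ (Real.exp 1)⁻¹ * Real.exp 1 :=
          mul_le_mul_of_nonneg_left (h3.trans h4) (by positivity)
      _ = 1 := inv_mul_cancel₀ hepos.ne'
  have hFnn : ∀ j ∈ S, (0:ℝ) ≤ (ctil * (ν j : ℝ) + 1) ^ γtil *
      (β + ε * (ν j : ℝ) / (4 * btil j * (M : ℝ))) ^ (-(ν j : ℝ)) := by
    intro j _
    have := hbpos j
    positivity
  have hnn : ∀ j ∈ S, (0:ℝ) ≤ (ctil * (ν' j : ℝ) + 1) ^ γtil *
      (β + ε * (ν' j : ℝ) / (4 * btil j * ((M : ℝ) + 1))) ^ (-(ν' j : ℝ)) := by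
    intro j _
    have := hbpos j
    positivity
  have hpt : ∀ j ∈ S, (ctil * (ν' j : ℝ) + 1) ^ γtil *
      (β + ε * (ν' j : ℝ) / (4 * btil j * ((M : ℝ) + 1))) ^ (-(ν' j : ℝ)) ≤
      K j * ((ctil * (ν j : ℝ) + 1) ^ γtil *
        (β + ε * (ν j : ℝ) / (4 * btil j * (M : ℝ))) ^ (-(ν j : ℝ))) := by
    intro j hjS
    by_cases hj : j = i
    · subst hj
      have hKj : K j = (Real.exp 1)⁻¹ := by simp [hKdef]
      rw [hKj, hν'i]
      push_cast
      exact aux_i ctil γtil ε (btil j) β hc hγ hε (hbpos j) hβ M (ν j) (hνjM j hjS)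
    · have hKj : K j = (1 + 1 / (M : ℝ)) ^ (ν j) := by simp [hKdef, hj]
      rw [hKj, hν'ne j hj]
      by_cases h0 : ν j = 0
      · simp [h0, Real.one_rpow, Real.rpow_zero]
      · exact aux_ne ctil γtil ε (btil j) β hc hγ hε (hbpos j) hβpos M (ν j)
          (le_trans (Nat.one_le_iff_ne_zero.mpr h0) (hνjM j hjS))
  rw [hBν', hBν]
  calc ∏ j ∈ S, (ctil * (ν' j : ℝ) + 1) ^ γtil *
        (β + ε * (ν' j : ℝ) / (4 * btil j * ((M : ℝ) + 1))) ^ (-(ν' j : ℝ))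
      ≤ ∏ j ∈ S, K j * ((ctil * (ν j : ℝ) + 1) ^ γtil *
          (β + ε * (ν j : ℝ) / (4 * btil j * (M : ℝ))) ^ (-(ν j : ℝ))) :=
        Finset.prod_le_prod hnn hpt
    _ = (∏ j ∈ S, K j) * ∏ j ∈ S, (ctil * (ν j : ℝ) + 1) ^ γtil *
          (β + ε * (ν j : ℝ) / (4 * btil j * (M : ℝ))) ^ (-(ν j : ℝ)) := by
        rw [Finset.prod_mul_distrib]
    _ ≤ 1 * ∏ j ∈ S, (ctil * (ν j : ℝ) + 1) ^ γtil *
          (β + ε * (ν j : ℝ) / (4 * btil j * (M : ℝ))) ^ (-(ν j : ℝ)) :=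
        mul_le_mul_of_nonneg_right hK1 (Finset.prod_nonneg hFnn)
    _ = ∏ j ∈ S, (ctil * (ν j : ℝ) + 1) ^ γtil *
          (β + ε * (ν j : ℝ) / (4 * btil j * (M : ℝ))) ^ (-(ν j : ℝ)) := one_mul _
end

section
/- Let t : 𝓕 → [0,∞) be anchored (i.e., t_ν ≥ t_μ whenever ν ≤ μ, and t_{e_j} ≤ t_{e_i} whenever i ≤ j), and suppose that for every δ > 0 the set {ν ∈ 𝓕 : t_ν > δ} is finite. Then for every s ∈ ℕ there exists an anchored set S ⊆ 𝓕 with exactly s elements such that t_ν ≥ t_μ for every ν ∈ S and every μ ∈ 𝓕 ∖ S. -/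
/-- A set `S` of multi-indices is anchored if it is lower (downward closed for the
componentwise order) and, whenever `e_j ∈ S`, also `e_i ∈ S` for all `i ≤ j`. -/
def IsAnchoredSet (S : Set (ℕ →₀ ℕ)) : Prop :=
  (∀ ν ∈ S, ∀ μ : ℕ →₀ ℕ, μ ≤ ν → μ ∈ S) ∧
  (∀ j : ℕ, Finsupp.single j 1 ∈ S → ∀ i : ℕ, i ≤ j → Finsupp.single i 1 ∈ S)

lemma le_single_cases {i : ℕ} {ρ : ℕ →₀ ℕ} (h : ρ ≤ Finsupp.single i 1) :
    ρ = 0 ∨ ρ = Finsupp.single i 1 := by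
  rw [Finsupp.le_def] at h
  by_cases hi : ρ i = 0
  · left
    ext j
    by_cases hji : j = i
    · simp [hji, hi]
    · have := h j
      rw [Finsupp.single_apply, if_neg (fun h => hji h.symm)] at this
      simp only [Finsupp.coe_zero, Pi.zero_apply]
      omega
  · right
    ext j
    by_cases hji : j = i
    · subst hji
      have := h j
      simp [Finsupp.single_apply] at this ⊢
      omega
    · have := h j
      rw [Finsupp.single_apply, if_neg (fun h => hji h.symm)] at this
      rw [Finsupp.single_apply, if_neg (fun h => hji h.symm)]
      omega

lemma exists_max_compl (t : (ℕ →₀ ℕ) → ℝ) (ht0 : ∀ ν, 0 ≤ t ν)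
    (hfin : ∀ δ : ℝ, 0 < δ → {ν : ℕ →₀ ℕ | δ < t ν}.Finite) (S : Finset (ℕ →₀ ℕ)) :
    ∃ μ0 ∉ S, ∀ ρ ∉ S, t ρ ≤ t μ0 := by
  by_cases h : ∃ ρ ∉ S, 0 < t ρ
  · obtain ⟨ρ1, hρ1S, hρ1⟩ := h
    set δ := t ρ1 / 2 with hδ
    have hδpos : 0 < δ := by positivity
    set B : Finset (ℕ →₀ ℕ) := (hfin δ hδpos).toFinset \ S with hB
    have hρ1B : ρ1 ∈ B := by
      simp [hB, Set.Finite.mem_toFinset, hρ1S]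
      linarith
    obtain ⟨μ0, hμ0B, hmax⟩ := Finset.exists_max_image B t ⟨ρ1, hρ1B⟩
    have hμ0S : μ0 ∉ S := by
      simp [hB] at hμ0B; exact hμ0B.2
    refine ⟨μ0, hμ0S, fun ρ hρ => ?_⟩
    by_cases hρδ : δ < t ρ
    · exact hmax ρ (by simp [hB, Set.Finite.mem_toFinset, hρ, hρδ])
    · have := hmax ρ1 hρ1B
      push_neg at hρδ
      linarith
  · push_neg at h
    obtain ⟨μ0, hμ0⟩ := Infinite.exists_notMem_finset S
    exact ⟨μ0, hμ0, fun ρ hρ => le_trans (h ρ hρ) (ht0 μ0)⟩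

/-- existence of anchored sets of largest elements.
Let `t : 𝓕 → [0,∞)` be anchored (nonincreasing for the componentwise order, and
`t_{e_j} ≤ t_{e_i}` for `i ≤ j`) and suppose `{ν : t_ν > δ}` is finite for every `δ > 0`.
Then for every `s ∈ ℕ` there is an anchored set `S` with exactly `s` elements such that
`t_ν ≥ t_μ` for every `ν ∈ S` and every `μ ∉ S`. -/
theorem stmt16 (t : (ℕ →₀ ℕ) → ℝ) (ht0 : ∀ ν, 0 ≤ t ν)
    (hmono : ∀ ν μ : ℕ →₀ ℕ, ν ≤ μ → t μ ≤ t ν)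
    (hanch : ∀ i j : ℕ, i ≤ j → t (Finsupp.single j 1) ≤ t (Finsupp.single i 1))
    (hfin : ∀ δ : ℝ, 0 < δ → {ν : ℕ →₀ ℕ | δ < t ν}.Finite) :
    ∀ s : ℕ, ∃ S : Finset (ℕ →₀ ℕ),
      IsAnchoredSet (↑S : Set (ℕ →₀ ℕ)) ∧ S.card = s ∧
      ∀ ν ∈ S, ∀ μ : ℕ →₀ ℕ, μ ∉ S → t μ ≤ t ν := by
  intro s
  induction s with
  | zero => exact ⟨∅, ⟨by simp, by simp⟩, by simp, by simp⟩
  | succ n ih =>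
    obtain ⟨S, ⟨hlow, hsing⟩, hcard, hmax⟩ := ih
    -- get a maximizer of t on the complement of S
    obtain ⟨μ0, hμ0S, hμ0max⟩ := exists_max_compl t ht0 hfin S
    -- get a minimal maximizer
    have hC : (Finset.Iic μ0 \ S).Nonempty := ⟨μ0, by simp [hμ0S]⟩
    obtain ⟨μ, hμC, hμmin⟩ : ∃ m ∈ (Finset.Iic μ0 \ S), ∀ x ∈ (Finset.Iic μ0 \ S), ¬x < m := by
      obtain ⟨m, hm⟩ := Finset.exists_minimal hC
      exact ⟨m, hm.prop, fun x hx hlt => lt_irrefl _ (lt_of_lt_of_le hlt (hm.2 hx hlt.le))⟩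
    simp only [Finset.mem_sdiff, Finset.mem_Iic] at hμC
    obtain ⟨hμle, hμS⟩ := hμC
    have hμmax : ∀ ρ ∉ S, t ρ ≤ t μ := fun ρ hρ =>
      le_trans (hμ0max ρ hρ) (hmono μ μ0 hμle)
    have hμminS : ∀ ρ, ρ < μ → ρ ∈ S := by
      intro ρ hρ
      by_contra hρS
      exact hμmin ρ (by simp [Finset.mem_sdiff, hρS, le_trans hρ.le hμle]) hρ
    -- the element we add: μ, unless μ is a single, in which case the minimal missing single
    by_cases hsgl : ∃ k, μ = Finsupp.single k 1
    · obtain ⟨k, hk⟩ := hsgl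
      have hPk : Finsupp.single k 1 ∉ S := hk ▸ hμS
      have hex : ∃ i, Finsupp.single i 1 ∉ S := ⟨k, hPk⟩
      set i := Nat.find hex with hi
      have hiS : Finsupp.single i 1 ∉ S := Nat.find_spec hex
      have hik : i ≤ k := Nat.find_le hPk
      have hltS : ∀ l, l < i → Finsupp.single l 1 ∈ S := by
        intro l hl
        by_contra hlS
        exact Nat.find_min hex hl hlS
      have htei : ∀ ρ ∉ S, t ρ ≤ t (Finsupp.single i 1) := by
        intro ρ hρ
        calc t ρ ≤ t μ := hμmax ρ hρ
        _ = t (Finsupp.single k 1) := by rw [hk]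
        _ ≤ t (Finsupp.single i 1) := hanch i k hik
      have h0S : (0 : ℕ →₀ ℕ) ∈ S := by
        by_contra h0
        have : (0 : ℕ →₀ ℕ) < μ := by
          refine pos_iff_ne_zero.mpr ?_
          rw [hk]
          simp
        exact h0 (hμminS 0 this)
      refine ⟨insert (Finsupp.single i 1) S, ⟨?_, ?_⟩, ?_, ?_⟩
      · intro ν hν ρ hρ
        simp only [Finset.coe_insert, Set.mem_insert_iff, Finset.mem_coe] at hν ⊢
        rcases hν with hν | hν
        · subst hν
          rcases le_single_cases hρ with h | h
          · right; rw [h]; exact h0S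
          · left; exact h
        · right; exact hlow ν hν ρ hρ
      · intro j hj l hl
        simp only [Finset.coe_insert, Set.mem_insert_iff, Finset.mem_coe] at hj ⊢
        rcases hj with hj | hj
        · have hji : j = i := by
            have := Finsupp.single_left_injective (one_ne_zero : (1:ℕ) ≠ 0) hj
            exact this
          subst hji
          rcases lt_or_eq_of_le hl with h | h
          · right; exact hltS l h
          · left; rw [h]
        · right; exact hsing j hj l hl
      · rw [Finset.card_insert_of_notMem hiS, hcard]
      · intro ν hν ρ hρ
        simp only [Finset.mem_insert] at hν hρ
        push_neg at hρ
        rcases hν with hν | hν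
        · subst hν; exact htei ρ hρ.2
        · exact hmax ν hν ρ hρ.2
    · push_neg at hsgl
      refine ⟨insert μ S, ⟨?_, ?_⟩, ?_, ?_⟩
      · intro ν hν ρ hρ
        simp only [Finset.coe_insert, Set.mem_insert_iff, Finset.mem_coe] at hν ⊢
        rcases hν with hν | hν
        · subst hν
          rcases eq_or_lt_of_le hρ with h | h
          · left; exact h
          · right; exact hμminS ρ h
        · right; exact hlow ν hν ρ hρ
      · intro j hj l hl
        simp only [Finset.coe_insert, Set.mem_insert_iff, Finset.mem_coe] at hj ⊢
        rcases hj with hj | hj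
        · exact absurd hj.symm (hsgl j)
        · right; exact hsing j hj l hl
      · rw [Finset.card_insert_of_notMem hμS, hcard]
      · intro ν hν ρ hρ
        simp only [Finset.mem_insert] at hν hρ
        push_neg at hρ
        rcases hν with hν | hν
        · subst hν; exact hμmax ρ hρ.2
        · exact hmax ν hν ρ hρ.2
end
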